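/- arXiv:2010.06392 — 6 statements merged into one kernel-verified Lean document; each statement's English description precedes it below -/
import Mathlib

section
/- Let B ∈ ℂ^{m×n}, E ∈ ℂ^{s×n}, A = [B; E]. Let σ̂ be a singular value of A with σ̂² not an eigenvalue of BB^H, and û = [f; y] a corresponding left singular vector. Then y satisfies the nonlinear eigenvalue equation [E (Σ_{j=1}^{n} v^{(j)} (v^{(j)})^H σ̂²/(σ̂² - σ_j²)) E^H - σ̂² I_s] y = 0, where (σ_j, v^{(j)}) are the singular values and right singular vectors of B (with σ_j = 0 for j > min(m,n)). -/
open Matrix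

/-- Proposition 1 (bottom block equation): the bottom block `y` of a left singular vector
of `A = [B; E]` satisfies the nonlinear eigenvalue equation
`[E (Σⱼ vⱼvⱼᴴ σ'²/(σ'² - σⱼ²)) Eᴴ - σ'² I] y = 0`, where `(σⱼ, vⱼ)` are the singular
values (extended by zero) and right singular vectors of `B`. -/
theorem bottom_block_nonlinear_eigenvalue_equation {m n s : ℕ}
    (B : Matrix (Fin m) (Fin n) ℂ) (E : Matrix (Fin s) (Fin n) ℂ)
    (A : Matrix (Fin m ⊕ Fin s) (Fin n) ℂ) (hA : A = fromRows B E)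
    (V : Matrix (Fin n) (Fin n) ℂ) (hV : V ∈ Matrix.unitaryGroup (Fin n) ℂ)
    (σ : Fin n → ℝ)
    (hBHB : Bᴴ * B = V * diagonal (fun j => ((σ j) ^ 2 : ℂ)) * Vᴴ)
    (σ' : ℝ) (f : Fin m → ℂ) (y : Fin s → ℂ)
    (hne : ∀ j, σ' ^ 2 ≠ (σ j) ^ 2)
    (hinv : IsUnit (B * Bᴴ - ((σ' : ℂ) ^ 2) • (1 : Matrix (Fin m) (Fin m) ℂ)))
    (hunit : ∑ i, Complex.normSq (Sum.elim f y i) = 1)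
    (hsv : (A * Aᴴ) *ᵥ Sum.elim f y = ((σ' : ℂ) ^ 2) • Sum.elim f y) :
    (E * (∑ j, ((σ' ^ 2 / (σ' ^ 2 - (σ j) ^ 2) : ℝ) : ℂ) •
          vecMulVec (fun i => V i j) (star fun i => V i j)) * Eᴴ -
        ((σ' : ℂ) ^ 2) • (1 : Matrix (Fin s) (Fin s) ℂ)) *ᵥ y = 0 := by
  set lam : ℂ := (σ' : ℂ) ^ 2 with hlam
  obtain ⟨hV1, hV2⟩ := (Unitary.mem_iff).mp hV
  have hVV : Vᴴ * V = 1 := hV1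
  have hVV' : V * Vᴴ = 1 := hV2
  -- nonzero denominators over ℂ
  have hne' : ∀ j, ((σ j : ℂ) ^ 2 - lam) ≠ 0 := by
    intro j h
    apply hne j
    have : ((σ j : ℂ) ^ 2) = lam := by linear_combination h
    rw [hlam] at this
    exact_mod_cast this.symm
  -- block structure
  have hAA : A * Aᴴ = fromBlocks (B * Bᴴ) (B * Eᴴ) (E * Bᴴ) (E * Eᴴ) := by
    rw [hA, conjTranspose_fromRows_eq_fromCols_conjTranspose, fromRows_mul_fromCols]
  rw [hAA, fromBlocks_mulVec] at hsv
  have htop : (B * Bᴴ) *ᵥ f + (B * Eᴴ) *ᵥ y = lam • f := by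
    funext i
    have := congrFun hsv (Sum.inl i)
    simpa using this
  have hbot : (E * Bᴴ) *ᵥ f + (E * Eᴴ) *ᵥ y = lam • y := by
    funext i
    have := congrFun hsv (Sum.inr i)
    simpa using this
  -- the inverse of B Bᴴ - lam
  set W : Matrix (Fin m) (Fin m) ℂ := ↑hinv.unit⁻¹ with hW
  have hW1 : W * (B * Bᴴ - lam • 1) = 1 := by
    rw [hW]
    nth_rewrite 2 [← hinv.unit_spec]
    exact hinv.unit.inv_mul
  -- coefficients
  set c : Fin n → ℂ := fun j => ((σ' ^ 2 / (σ' ^ 2 - (σ j) ^ 2) : ℝ) : ℂ) with hc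
  have hcd : ∀ j, c j * ((σ j : ℂ) ^ 2 - lam) = -lam := by
    intro j
    have hsub : lam - (σ j : ℂ) ^ 2 ≠ 0 := fun h => hne' j (by linear_combination -h)
    have hcj : c j = lam / (lam - (σ j : ℂ) ^ 2) := by
      rw [hc, hlam]; push_cast; ring
    rw [hcj, div_mul_eq_mul_div, div_eq_iff hsub]
    ring
  -- sum as V * diagonal c * Vᴴ
  set S : Matrix (Fin n) (Fin n) ℂ :=
    ∑ j, c j • vecMulVec (fun i => V i j) (star fun i => V i j) with hSdef
  have hS : S = V * diagonal c * Vᴴ := by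
    ext i k
    rw [hSdef]
    simp only [Matrix.sum_apply, Matrix.smul_apply, vecMulVec_apply, Pi.star_apply,
      smul_eq_mul]
    rw [Matrix.mul_apply]
    simp only [Matrix.mul_diagonal, conjTranspose_apply]
    exact Finset.sum_congr rfl fun j _ => by ring
  -- N and its inverse
  set N : Matrix (Fin n) (Fin n) ℂ := Bᴴ * B - lam • 1 with hN
  have hNdiag : N = V * diagonal (fun j => (σ j : ℂ) ^ 2 - lam) * Vᴴ := by
    rw [hN, hBHB]
    have : lam • (1 : Matrix (Fin n) (Fin n) ℂ) = V * diagonal (fun _ => lam) * Vᴴ := by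
      rw [← smul_one_eq_diagonal]
      rw [Matrix.mul_smul, Matrix.smul_mul, Matrix.mul_one, hVV']
    rw [this, ← Matrix.sub_mul, ← Matrix.mul_sub, diagonal_sub]
  set Ninv : Matrix (Fin n) (Fin n) ℂ :=
    V * diagonal (fun j => ((σ j : ℂ) ^ 2 - lam)⁻¹) * Vᴴ with hNinv
  have hNNinv : N * Ninv = 1 := by
    rw [hNdiag, hNinv]
    calc V * diagonal (fun j => (σ j : ℂ) ^ 2 - lam) * Vᴴ *
          (V * diagonal (fun j => ((σ j : ℂ) ^ 2 - lam)⁻¹) * Vᴴ)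
        = V * (diagonal (fun j => (σ j : ℂ) ^ 2 - lam) * (Vᴴ * V) *
            diagonal (fun j => ((σ j : ℂ) ^ 2 - lam)⁻¹)) * Vᴴ := by
          simp only [Matrix.mul_assoc]
      _ = 1 := by
          rw [hVV, Matrix.mul_one, diagonal_mul_diagonal]
          have : (fun i => ((σ i : ℂ) ^ 2 - lam) * ((σ i : ℂ) ^ 2 - lam)⁻¹) =
              fun _ => (1 : ℂ) := by
            funext i; exact mul_inv_cancel₀ (hne' i)
          rw [this, diagonal_one, Matrix.mul_one, hVV']
  -- S * N = -lam • 1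
  have hSN : S * N = (-lam) • 1 := by
    rw [hS, hNdiag]
    calc V * diagonal c * Vᴴ * (V * diagonal (fun j => (σ j : ℂ) ^ 2 - lam) * Vᴴ)
        = V * (diagonal c * (Vᴴ * V) * diagonal (fun j => (σ j : ℂ) ^ 2 - lam)) * Vᴴ := by
          simp only [Matrix.mul_assoc]
      _ = (-lam) • 1 := by
          rw [hVV, Matrix.mul_one, diagonal_mul_diagonal]
          have : (fun i => c i * ((σ i : ℂ) ^ 2 - lam)) = fun _ => -lam := by
            funext i; exact hcd i
          rw [this, ← smul_one_eq_diagonal, Matrix.mul_smul, Matrix.mul_one,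
            Matrix.smul_mul, hVV']
  -- (1 - Bᴴ W B) * N = -lam • 1
  have hTN : (1 - Bᴴ * W * B) * N = (-lam) • 1 := by
    have hBN : B * N = (B * Bᴴ - lam • 1) * B := by
      rw [hN, Matrix.mul_sub, Matrix.sub_mul, Matrix.mul_smul, Matrix.smul_mul,
        Matrix.mul_one, Matrix.one_mul, Matrix.mul_assoc]
    have key : Bᴴ * W * B * N = Bᴴ * B := by
      calc Bᴴ * W * B * N = Bᴴ * ((W * (B * Bᴴ - lam • 1)) * B) := by
            rw [Matrix.mul_assoc (Bᴴ * W) B N, hBN]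
            simp only [Matrix.mul_assoc]
        _ = Bᴴ * B := by rw [hW1, Matrix.one_mul]
    rw [Matrix.sub_mul, Matrix.one_mul, key, hN, sub_sub_cancel_left, neg_smul]
  -- hence S = 1 - Bᴴ W B
  have hSeq : S = 1 - Bᴴ * W * B := by
    calc S = S * (N * Ninv) := by rw [hNNinv, Matrix.mul_one]
      _ = (S * N) * Ninv := by rw [Matrix.mul_assoc]
      _ = ((1 - Bᴴ * W * B) * N) * Ninv := by rw [hSN, hTN]
      _ = (1 - Bᴴ * W * B) * (N * Ninv) := by rw [Matrix.mul_assoc]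
      _ = 1 - Bᴴ * W * B := by rw [hNNinv, Matrix.mul_one]
  -- express f
  have hf : f = -(W *ᵥ ((B * Eᴴ) *ᵥ y)) := by
    have h1 : (B * Bᴴ - lam • 1) *ᵥ f = -((B * Eᴴ) *ᵥ y) := by
      rw [sub_mulVec, smul_mulVec, one_mulVec]
      rw [← htop]; abel
    have h2 : W *ᵥ ((B * Bᴴ - lam • 1) *ᵥ f) = f := by
      rw [mulVec_mulVec, hW1, one_mulVec]
    rw [← h2, h1, mulVec_neg]
  -- finish
  show (E * S * Eᴴ - lam • 1) *ᵥ y = 0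
  rw [hSeq]
  have expand : E * (1 - Bᴴ * W * B) * Eᴴ = E * Eᴴ - E * Bᴴ * W * (B * Eᴴ) := by
    rw [Matrix.mul_sub, Matrix.mul_one, Matrix.sub_mul]
    simp only [Matrix.mul_assoc]
  rw [expand, sub_mulVec, sub_mulVec, smul_mulVec, one_mulVec]
  have h3 : (E * Bᴴ * W * (B * Eᴴ)) *ᵥ y = -((E * Bᴴ) *ᵥ f) := by
    rw [hf, mulVec_neg, neg_neg, mulVec_mulVec, mulVec_mulVec, Matrix.mul_assoc]
  rw [h3, sub_neg_eq_add, add_comm ((E * Eᴴ) *ᵥ y), hbot, sub_self]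
end

section
/- Let B ∈ ℂ^{m×n} with left singular vectors u^{(1)},...,u^{(min(m,n))}, singular values σ_j, and right singular vectors v^{(j)}. Let E ∈ ℂ^{s×n} and A = [B; E]. If û = [f; y] is a left singular vector of A with singular value σ̂ such that σ̂² ≠ σ_j² for all j, then f = Σ_j χ_j u^{(j)} with coefficients χ_j = -(E v^{(j)})^H y · σ_j/(σ_j² - σ̂²); equivalently, the top block f of û lies in the span of the left singular vectors of B. -/
open Matrix

lemma vecMulVec_mulVec' {m n : Type*} [Fintype n] (a : m → ℂ) (b : n → ℂ) (x : n → ℂ) :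
    vecMulVec a b *ᵥ x = (b ⬝ᵥ x) • a := by
  ext i
  simp only [mulVec, vecMulVec_apply, dotProduct, Pi.smul_apply, smul_eq_mul, of_apply]
  rw [Finset.sum_mul]
  exact Finset.sum_congr rfl fun k _ => by ring

lemma sum_mulVec' {m n ι : Type*} [Fintype n] [Fintype ι] (M : ι → Matrix m n ℂ)
    (x : n → ℂ) : (∑ j, M j) *ᵥ x = ∑ j, M j *ᵥ x := by
  ext i
  simp only [mulVec, dotProduct, Finset.sum_apply, Matrix.sum_apply, Finset.sum_mul]
  exact Finset.sum_comm

lemma conjTranspose_vecMulVec' {m n : Type*} (a : m → ℂ) (b : n → ℂ) :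
    (vecMulVec a b)ᴴ = vecMulVec (star b) (star a) := by
  ext i j
  simp [vecMulVec_apply, conjTranspose_apply, mul_comm]

/-- Proposition 2: the top block `f` of a left singular vector of `A = [B; E]` expands in
the left singular vectors of `B` as `f = Σⱼ χⱼ u⁽ʲ⁾` with
`χⱼ = -(E v⁽ʲ⁾)ᴴ y ⬝ σⱼ/(σⱼ² - σ'²)`. -/
theorem top_block_expansion_in_left_singular_vectors {m n s : ℕ}
    (B : Matrix (Fin m) (Fin n) ℂ) (E : Matrix (Fin s) (Fin n) ℂ)
    (A : Matrix (Fin m ⊕ Fin s) (Fin n) ℂ) (hA : A = fromRows B E)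
    (u : Fin (Nat.min m n) → Fin m → ℂ) (v : Fin (Nat.min m n) → Fin n → ℂ)
    (σ : Fin (Nat.min m n) → ℝ)
    (hu : ∀ i j, star (u i) ⬝ᵥ u j = if i = j then 1 else 0)
    (hv : ∀ i j, star (v i) ⬝ᵥ v j = if i = j then 1 else 0)
    (hB : B = ∑ j, ((σ j : ℝ) : ℂ) • vecMulVec (u j) (star (v j)))
    (σ' : ℝ) (f : Fin m → ℂ) (y : Fin s → ℂ)
    (hne : ∀ j, σ' ^ 2 ≠ (σ j) ^ 2)
    (hinv : IsUnit (B * Bᴴ - ((σ' : ℂ) ^ 2) • (1 : Matrix (Fin m) (Fin m) ℂ)))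
    (hunit : ∑ i, Complex.normSq (Sum.elim f y i) = 1)
    (hsv : (A * Aᴴ) *ᵥ Sum.elim f y = ((σ' : ℂ) ^ 2) • Sum.elim f y) :
    f = ∑ j, (-(star (E *ᵥ v j) ⬝ᵥ y) *
        ((σ j / ((σ j) ^ 2 - σ' ^ 2) : ℝ) : ℂ)) • u j := by
  set M : Matrix (Fin m) (Fin m) ℂ :=
    B * Bᴴ - ((σ' : ℂ) ^ 2) • (1 : Matrix (Fin m) (Fin m) ℂ) with hMdef
  set g : Fin m → ℂ := ∑ j, (-(star (E *ᵥ v j) ⬝ᵥ y) *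
      ((σ j / ((σ j) ^ 2 - σ' ^ 2) : ℝ) : ℂ)) • u j with hgdef
  -- General expansion of `B *ᵥ x`
  have hBx : ∀ x : Fin n → ℂ,
      B *ᵥ x = ∑ j, (((σ j : ℝ) : ℂ) * (star (v j) ⬝ᵥ x)) • u j := by
    intro x
    rw [hB]
    rw [sum_mulVec']
    refine Finset.sum_congr rfl fun j _ => ?_
    rw [smul_mulVec, vecMulVec_mulVec', smul_smul]
  -- `Bᴴ *ᵥ u k = σ k • v k`
  have hBH : Bᴴ = ∑ j, ((σ j : ℝ) : ℂ) • vecMulVec (v j) (star (u j)) := by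
    rw [hB, conjTranspose_sum]
    refine Finset.sum_congr rfl fun j _ => ?_
    rw [conjTranspose_smul, conjTranspose_vecMulVec']
    simp
  have hBHu : ∀ k, Bᴴ *ᵥ u k = ((σ k : ℝ) : ℂ) • v k := by
    intro k
    rw [hBH]
    rw [sum_mulVec']
    have h2 : ∀ j, (((σ j : ℝ) : ℂ) • vecMulVec (v j) (star (u j))) *ᵥ u k
        = (((σ j : ℝ) : ℂ) * (star (u j) ⬝ᵥ u k)) • v j := by
      intro j
      rw [smul_mulVec, vecMulVec_mulVec', smul_smul]
    simp_rw [h2, hu]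
    simp
  -- `M *ᵥ u k = (σ k ^ 2 - σ' ^ 2) • u k`
  have hMu : ∀ k, M *ᵥ u k = (((σ k : ℝ) : ℂ) ^ 2 - ((σ' : ℝ) : ℂ) ^ 2) • u k := by
    intro k
    rw [hMdef, sub_mulVec, smul_mulVec, one_mulVec, ← mulVec_mulVec, hBHu,
      mulVec_smul, hBx]
    simp_rw [hv]
    simp only [mul_ite, mul_one, mul_zero, ite_smul, zero_smul, Finset.sum_ite_eq',
      Finset.mem_univ, if_true, smul_ite, smul_zero]
    rw [smul_smul, ← sq, sub_smul]
  -- the top-block equation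
  have hAA : A * Aᴴ = fromBlocks (B * Bᴴ) (B * Eᴴ) (E * Bᴴ) (E * Eᴴ) := by
    rw [hA, conjTranspose_fromRows_eq_fromCols_conjTranspose, fromRows_mul_fromCols]
  rw [hAA, fromBlocks_mulVec] at hsv
  have htop : (B * Bᴴ) *ᵥ f + (B * Eᴴ) *ᵥ y = ((σ' : ℂ) ^ 2) • f := by
    funext i
    have h := congrFun hsv (Sum.inl i)
    simpa using h
  have hMf : M *ᵥ f = -((B * Eᴴ) *ᵥ y) := by
    rw [hMdef, sub_mulVec, smul_mulVec, one_mulVec, ← htop]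
    abel
  -- compute `M *ᵥ g`
  have hc : ∀ j, star (v j) ⬝ᵥ (Eᴴ *ᵥ y) = star (E *ᵥ v j) ⬝ᵥ y := by
    intro j
    rw [dotProduct_mulVec, star_mulVec]
  have hMg : M *ᵥ g = -((B * Eᴴ) *ᵥ y) := by
    have hlin : M *ᵥ g = ∑ j, (-(star (E *ᵥ v j) ⬝ᵥ y) *
        ((σ j / ((σ j) ^ 2 - σ' ^ 2) : ℝ) : ℂ)) • (M *ᵥ u j) := by
      rw [hgdef]
      rw [show ∀ z : Fin m → ℂ, M *ᵥ z = M.mulVecLin z from fun _ => rfl]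
      rw [map_sum]
      refine Finset.sum_congr rfl fun j _ => ?_
      rw [_root_.map_smul]
      rfl
    rw [hlin]
    have hRHS : -((B * Eᴴ) *ᵥ y)
        = ∑ j, (-(((σ j : ℝ) : ℂ) * (star (E *ᵥ v j) ⬝ᵥ y))) • u j := by
      rw [← mulVec_mulVec, hBx]
      simp_rw [hc]
      rw [← Finset.sum_neg_distrib]
      refine Finset.sum_congr rfl fun j _ => ?_
      rw [neg_smul]
    rw [hRHS]
    refine Finset.sum_congr rfl fun j _ => ?_
    rw [hMu, smul_smul]
    congr 1
    have hd : ((σ j : ℝ) : ℂ) ^ 2 - ((σ' : ℝ) : ℂ) ^ 2 ≠ 0 := by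
      rw [sub_ne_zero]
      intro h
      exact hne j (by exact_mod_cast h.symm)
    have hcast : ((σ j / (σ j ^ 2 - σ' ^ 2) : ℝ) : ℂ)
        = ((σ j : ℝ) : ℂ) / (((σ j : ℝ) : ℂ) ^ 2 - ((σ' : ℝ) : ℂ) ^ 2) := by
      push_cast
      ring
    rw [hcast]
    field_simp
  -- invertibility gives the conclusion
  obtain ⟨U, hU⟩ := hinv
  have h1 : (↑U⁻¹ : Matrix (Fin m) (Fin m) ℂ) * M = 1 := by
    rw [← hU]; exact U.inv_mul
  calc f = ((↑U⁻¹ : Matrix (Fin m) (Fin m) ℂ) * M) *ᵥ f := by rw [h1, one_mulVec]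
    _ = (↑U⁻¹ : Matrix (Fin m) (Fin m) ℂ) *ᵥ (M *ᵥ f) := by rw [← mulVec_mulVec]
    _ = (↑U⁻¹ : Matrix (Fin m) (Fin m) ℂ) *ᵥ (M *ᵥ g) := by rw [hMf, hMg]
    _ = ((↑U⁻¹ : Matrix (Fin m) (Fin m) ℂ) * M) *ᵥ g := by rw [mulVec_mulVec]
    _ = g := by rw [h1, one_mulVec]
end

section
/- Let B ∈ ℂ^{m×n}, E ∈ ℂ^{s×n}, A = [B; E], and let û = [f; y] be a unit left singular vector of A with singular value σ̂ satisfying σ̂² ≠ σ_j² for all singular values σ_j of B. Let Z = [[U_k, 0]; [0, I_s]], where U_k holds the k leading left singular vectors of B. If σ_{k+1} < σ̂, then min_{z ∈ range(Z)} ‖û - z‖ ≤ γ σ_{k+1}/(σ̂² - σ_{k+1}²), where γ = max_{k < j} |(E v^{(j)})^H y| ≤ ‖E^H y‖ (taking γ = ‖E^H y‖ suffices). -/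
open Matrix
open scoped ComplexConjugate

/-- The Euclidean (ℓ₂) norm of a complex vector. -/
noncomputable def l2norm {ι : Type*} [Fintype ι] (w : ι → ℂ) : ℝ :=
  Real.sqrt (∑ i, Complex.normSq (w i))

namespace DistAux

variable {α β γ : Type*} [Fintype α] [Fintype β]

set_option linter.unusedSectionVars false

lemma sum_mulVec' (T : Finset γ) (M : γ → Matrix α β ℂ) (x : β → ℂ) :
    (∑ j ∈ T, M j) *ᵥ x = ∑ j ∈ T, M j *ᵥ x := by
  ext i
  simp only [mulVec, dotProduct, Matrix.sum_apply, Finset.sum_apply, Finset.sum_mul]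
  exact Finset.sum_comm

lemma dotProduct_sum' (T : Finset γ) (a : β → ℂ) (f : γ → β → ℂ) :
    a ⬝ᵥ (∑ j ∈ T, f j) = ∑ j ∈ T, a ⬝ᵥ f j := by
  simp only [dotProduct, Finset.sum_apply, Finset.mul_sum]
  exact Finset.sum_comm

lemma sum_dotProduct' (T : Finset γ) (f : γ → β → ℂ) (a : β → ℂ) :
    (∑ j ∈ T, f j) ⬝ᵥ a = ∑ j ∈ T, f j ⬝ᵥ a := by
  simp only [dotProduct, Finset.sum_apply, Finset.sum_mul]
  exact Finset.sum_comm

lemma vecMulVec_mulVec' (a : α → ℂ) (b : β → ℂ) (x : β → ℂ) :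
    vecMulVec a b *ᵥ x = (b ⬝ᵥ x) • a := by
  ext i
  simp only [mulVec, vecMulVec_apply, dotProduct, Pi.smul_apply, smul_eq_mul, Finset.sum_mul]
  exact Finset.sum_congr rfl fun l _ => by ring

lemma star_dot_self (z : α → ℂ) :
    star z ⬝ᵥ z = ((∑ i, Complex.normSq (z i) : ℝ) : ℂ) := by
  push_cast
  simp [dotProduct, Complex.normSq_eq_conj_mul_self, Complex.star_def]

lemma orth_dot {N : ℕ} (v : Fin N → α → ℂ)
    (hv : ∀ i j, star (v i) ⬝ᵥ v j = if i = j then 1 else 0)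
    (T : Finset (Fin N)) (c d : Fin N → ℂ) :
    star (∑ j ∈ T, c j • v j) ⬝ᵥ (∑ j ∈ T, d j • v j) =
      ∑ j ∈ T, conj (c j) * d j := by
  rw [star_sum, sum_dotProduct']
  refine Finset.sum_congr rfl fun j hj => ?_
  rw [dotProduct_sum']
  have : ∀ l ∈ T, star (c j • v j) ⬝ᵥ (d l • v l)
      = conj (c j) * (d l * if j = l then 1 else 0) := by
    intro l _
    rw [star_smul, smul_dotProduct, dotProduct_smul, hv]
    simp [Complex.star_def, mul_comm]
  rw [Finset.sum_congr rfl this]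
  simp only [mul_ite, mul_one, mul_zero, Finset.mul_sum]
  rw [Finset.sum_ite_eq T j fun l => conj (c j) * d l]
  simp [hj]

lemma dot_orth_sum {N : ℕ} (v : Fin N → α → ℂ)
    (hv : ∀ i j, star (v i) ⬝ᵥ v j = if i = j then 1 else 0)
    (c : Fin N → ℂ) (j : Fin N) :
    star (v j) ⬝ᵥ (∑ l, c l • v l) = c j := by
  rw [dotProduct_sum']
  have : ∀ l ∈ Finset.univ, star (v j) ⬝ᵥ (c l • v l)
      = if j = l then c l else 0 := by
    intro l _
    rw [dotProduct_smul, hv]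
    split <;> simp
  rw [Finset.sum_congr rfl this, Finset.sum_ite_eq Finset.univ j c]
  simp

lemma sum_normSq_orth {N : ℕ} (v : Fin N → α → ℂ)
    (hv : ∀ i j, star (v i) ⬝ᵥ v j = if i = j then 1 else 0)
    (T : Finset (Fin N)) (c : Fin N → ℂ) :
    ∑ i, Complex.normSq ((∑ j ∈ T, c j • v j) i) = ∑ j ∈ T, Complex.normSq (c j) := by
  have h1 := orth_dot v hv T c c
  rw [star_dot_self] at h1
  have : (((∑ i, Complex.normSq ((∑ j ∈ T, c j • v j) i)) : ℝ) : ℂ)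
      = (((∑ j ∈ T, Complex.normSq (c j)) : ℝ) : ℂ) := by
    rw [h1]
    push_cast
    exact Finset.sum_congr rfl fun j _ => (Complex.normSq_eq_conj_mul_self).symm ▸ rfl
  exact_mod_cast this

lemma conj_dot (w x : α → ℂ) : star w ⬝ᵥ x = conj (star x ⬝ᵥ w) := by
  simp [dotProduct, map_sum, mul_comm, Complex.star_def]

lemma bessel {N : ℕ} (v : Fin N → α → ℂ)
    (hv : ∀ i j, star (v i) ⬝ᵥ v j = if i = j then 1 else 0) (w : α → ℂ) :
    ∑ j, Complex.normSq (star (v j) ⬝ᵥ w) ≤ ∑ i, Complex.normSq (w i) := by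
  set g : Fin N → ℂ := fun j => star (v j) ⬝ᵥ w with hg
  set p : α → ℂ := ∑ j, g j • v j with hp
  have hS : ∀ (d : Fin N → ℂ), (∑ j, conj (d j) * d j)
      = (((∑ j, Complex.normSq (d j)) : ℝ) : ℂ) := by
    intro d
    push_cast
    exact Finset.sum_congr rfl fun j _ => (Complex.normSq_eq_conj_mul_self).symm
  have hpw : star p ⬝ᵥ w = (((∑ j, Complex.normSq (g j)) : ℝ) : ℂ) := by
    rw [hp, star_sum, sum_dotProduct', ← hS]
    refine Finset.sum_congr rfl fun j _ => ?_
    rw [star_smul, smul_dotProduct]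
    simp [Complex.star_def, hg]
  have hwp : star w ⬝ᵥ p = (((∑ j, Complex.normSq (g j)) : ℝ) : ℂ) := by
    rw [hp, dotProduct_sum', ← hS]
    refine Finset.sum_congr rfl fun j _ => ?_
    rw [dotProduct_smul, conj_dot w (v j)]
    simp [hg, mul_comm]
  have hpp : star p ⬝ᵥ p = (((∑ j, Complex.normSq (g j)) : ℝ) : ℂ) := by
    rw [hp, orth_dot v hv, hS]
  have key : star (w - p) ⬝ᵥ (w - p)
      = star w ⬝ᵥ w - (((∑ j, Complex.normSq (g j)) : ℝ) : ℂ) := by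
    rw [star_sub, sub_dotProduct, dotProduct_sub, dotProduct_sub, hpw, hwp, hpp]
    ring
  rw [star_dot_self, star_dot_self] at key
  have hre : (∑ i, Complex.normSq ((w - p) i))
      = (∑ i, Complex.normSq (w i)) - ∑ j, Complex.normSq (g j) := by
    exact_mod_cast key
  have hnn : 0 ≤ ∑ i, Complex.normSq ((w - p) i) :=
    Finset.sum_nonneg fun i _ => Complex.normSq_nonneg _
  linarith

lemma ratio_mono {a b c : ℝ} (ha : 0 ≤ a) (hab : a ≤ b) (hbc : b < c) :
    a / (c ^ 2 - a ^ 2) ≤ b / (c ^ 2 - b ^ 2) := by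
  have hb0 : 0 < c ^ 2 - b ^ 2 := by nlinarith
  have ha0 : 0 < c ^ 2 - a ^ 2 := by nlinarith
  rw [div_le_div_iff₀ ha0 hb0]
  nlinarith [mul_nonneg (sub_nonneg.2 hab)
    (add_nonneg (sq_nonneg c) (mul_nonneg ha (ha.trans hab)))]

end DistAux

set_option maxHeartbeats 1000000 in
/-- Proposition 3: with `Z = [[U_k, 0], [0, I_s]]` built from the `k` leading left singular
vectors of `B`, the distance of a unit left singular vector `û = [f; y]` of `A = [B; E]`
(with singular value `σ' > σ_{k+1}`) from `range(Z)` is at most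
`γ σ_{k+1} / (σ'² - σ_{k+1}²)` with `γ = ‖Eᴴ y‖`. -/
theorem distance_bound_leading_left_singular_basis {m n s k : ℕ}
    (B : Matrix (Fin m) (Fin n) ℂ) (E : Matrix (Fin s) (Fin n) ℂ)
    (A : Matrix (Fin m ⊕ Fin s) (Fin n) ℂ) (hA : A = fromRows B E)
    (u : Fin (Nat.min m n) → Fin m → ℂ) (v : Fin (Nat.min m n) → Fin n → ℂ)
    (σ : Fin (Nat.min m n) → ℝ)
    (hu : ∀ i j, star (u i) ⬝ᵥ u j = if i = j then 1 else 0)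
    (hv : ∀ i j, star (v i) ⬝ᵥ v j = if i = j then 1 else 0)
    (hB : B = ∑ j, ((σ j : ℝ) : ℂ) • vecMulVec (u j) (star (v j)))
    (hσanti : Antitone σ) (hσnn : ∀ j, 0 ≤ σ j)
    (hkm : k < Nat.min m n)
    (σ' : ℝ) (f : Fin m → ℂ) (y : Fin s → ℂ)
    (hne : ∀ j, σ' ^ 2 ≠ (σ j) ^ 2)
    (hinv : IsUnit (B * Bᴴ - ((σ' : ℂ) ^ 2) • (1 : Matrix (Fin m) (Fin m) ℂ)))
    (hunit : ∑ i, Complex.normSq (Sum.elim f y i) = 1)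
    (hsv : (A * Aᴴ) *ᵥ Sum.elim f y = ((σ' : ℂ) ^ 2) • Sum.elim f y)
    (hgap : σ ⟨k, hkm⟩ < σ') :
    sInf {d : ℝ | ∃ (c : Fin k → ℂ) (w : Fin s → ℂ),
        d = l2norm (Sum.elim f y -
          Sum.elim (∑ j : Fin k, c j • u (Fin.castLE hkm.le j)) w)} ≤
      l2norm (Eᴴ *ᵥ y) * σ ⟨k, hkm⟩ / (σ' ^ 2 - (σ ⟨k, hkm⟩) ^ 2) := by
  classical
  set g : Fin (Nat.min m n) → ℂ := fun j => star (v j) ⬝ᵥ (Eᴴ *ᵥ y) with hgdef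
  set χ : Fin (Nat.min m n) → ℂ :=
    fun j => ((σ j : ℂ) * g j) / ((σ' : ℂ) ^ 2 - ((σ j : ℝ) : ℂ) ^ 2) with hχdef
  have hden : ∀ j, ((σ' : ℂ) ^ 2 - ((σ j : ℝ) : ℂ) ^ 2) ≠ 0 := by
    intro j
    have h : ((σ' ^ 2 - (σ j) ^ 2 : ℝ) : ℂ) ≠ 0 := by
      exact_mod_cast sub_ne_zero.mpr (hne j)
    simpa [Complex.ofReal_sub, Complex.ofReal_pow] using h
  have hχmul : ∀ j, χ j * (((σ j : ℝ) : ℂ) ^ 2 - (σ' : ℂ) ^ 2)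
      = -((σ j : ℂ) * g j) := by
    intro j
    rw [hχdef]
    field_simp [hden j]
    ring
  -- expansions of B and Bᴴ acting on vectors
  have hBx : ∀ x : Fin n → ℂ,
      B *ᵥ x = ∑ j, ((σ j : ℂ) * (star (v j) ⬝ᵥ x)) • u j := by
    intro x
    rw [hB, DistAux.sum_mulVec']
    refine Finset.sum_congr rfl fun j _ => ?_
    rw [smul_mulVec, DistAux.vecMulVec_mulVec', smul_smul]
  have hBH : Bᴴ = ∑ j, ((σ j : ℝ) : ℂ) • vecMulVec (v j) (star (u j)) := by
    rw [hB]
    ext i l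
    simp only [conjTranspose_apply, Matrix.sum_apply, Matrix.smul_apply, vecMulVec_apply,
      Pi.star_apply, smul_eq_mul, star_sum, star_mul', star_star, Complex.star_def,
      Complex.conj_ofReal, Complex.conj_conj]
    exact Finset.sum_congr rfl fun j _ => by ring
  have hBHx : ∀ x : Fin m → ℂ,
      Bᴴ *ᵥ x = ∑ j, ((σ j : ℂ) * (star (u j) ⬝ᵥ x)) • v j := by
    intro x
    rw [hBH, DistAux.sum_mulVec']
    refine Finset.sum_congr rfl fun j _ => ?_
    rw [smul_mulVec, DistAux.vecMulVec_mulVec', smul_smul]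
  -- block structure and the top equation
  have hAAH : A * Aᴴ = fromBlocks (B * Bᴴ) (B * Eᴴ) (E * Bᴴ) (E * Eᴴ) := by
    rw [hA, conjTranspose_fromRows_eq_fromCols_conjTranspose, fromRows_mul_fromCols]
  rw [hAAH, fromBlocks_mulVec] at hsv
  have htop : (B * Bᴴ) *ᵥ f + (B * Eᴴ) *ᵥ y = ((σ' : ℂ) ^ 2) • f := by
    funext i
    have h := congrFun hsv (Sum.inl i)
    simpa using h
  set M : Matrix (Fin m) (Fin m) ℂ :=
    B * Bᴴ - ((σ' : ℂ) ^ 2) • (1 : Matrix (Fin m) (Fin m) ℂ) with hMdef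
  have hMv : ∀ x : Fin m → ℂ, M *ᵥ x = (B * Bᴴ) *ᵥ x - ((σ' : ℂ) ^ 2) • x := by
    intro x
    rw [hMdef, sub_mulVec, smul_mulVec, one_mulVec]
  have hMf : M *ᵥ f = -((B * Eᴴ) *ᵥ y) := by
    have h1 : (B * Bᴴ) *ᵥ f = ((σ' : ℂ) ^ 2) • f - (B * Eᴴ) *ᵥ y := by
      rw [← htop]; abel
    rw [hMv, h1]; abel
  set p : Fin m → ℂ := ∑ j, χ j • u j with hpdef
  have hBHp : Bᴴ *ᵥ p = ∑ j, ((σ j : ℂ) * χ j) • v j := by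
    rw [hBHx p, hpdef]
    exact Finset.sum_congr rfl fun j _ => by rw [DistAux.dot_orth_sum u hu χ j]
  have hBBp : (B * Bᴴ) *ᵥ p = ∑ j, (((σ j : ℂ) * (σ j : ℂ)) * χ j) • u j := by
    rw [← mulVec_mulVec, hBHp, hBx]
    refine Finset.sum_congr rfl fun j _ => ?_
    rw [DistAux.dot_orth_sum v hv _ j, mul_assoc]
  have hMp : M *ᵥ p = -((B * Eᴴ) *ᵥ y) := by
    rw [hMv, hBBp, ← mulVec_mulVec, hBx (Eᴴ *ᵥ y), hpdef, Finset.smul_sum]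
    rw [← Finset.sum_sub_distrib, ← Finset.sum_neg_distrib]
    refine Finset.sum_congr rfl fun j _ => ?_
    rw [smul_smul, ← sub_smul, ← neg_smul]
    congr 1
    have h := hχmul j
    push_cast at h ⊢
    linear_combination h
  have hdet : IsUnit M.det := (Matrix.isUnit_iff_isUnit_det M).mp hinv
  have hfp : f = p := by
    have h1 : M⁻¹ *ᵥ (M *ᵥ f) = M⁻¹ *ᵥ (M *ᵥ p) := by rw [hMf, hMp]
    rwa [mulVec_mulVec, mulVec_mulVec, Matrix.nonsing_inv_mul M hdet,
      one_mulVec, one_mulVec] at h1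
  -- the chosen element of the set
  set c0 : Fin k → ℂ := fun j => χ (Fin.castLE hkm.le j) with hc0
  set q : Fin m → ℂ := ∑ j : Fin k, c0 j • u (Fin.castLE hkm.le j) with hqdef
  set T : Finset (Fin (Nat.min m n)) :=
    Finset.univ.filter (fun j => ¬ ((j : ℕ) < k)) with hT
  have hq : q = ∑ j ∈ Finset.univ.filter
      (fun j : Fin (Nat.min m n) => (j : ℕ) < k), χ j • u j := by
    rw [hqdef]
    refine Finset.sum_bij' (fun (a : Fin k) _ => Fin.castLE hkm.le a)
      (fun (b : Fin (Nat.min m n)) hb =>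
        (⟨(b : ℕ), (Finset.mem_filter.1 hb).2⟩ : Fin k))
      (fun a _ => ?_) (fun b hb => Finset.mem_univ _)
      (fun a _ => ?_) (fun b hb => ?_) (fun a _ => rfl)
    · simp [Fin.castLE]
    · rfl
    · rfl
  have hfq : f - q = ∑ j ∈ T, χ j • u j := by
    rw [hfp, hpdef, hq, hT,
      ← Finset.sum_filter_add_sum_filter_not Finset.univ
        (fun j : Fin (Nat.min m n) => (j : ℕ) < k) (fun j => χ j • u j)]
    abel
  have hdiff : Sum.elim f y - Sum.elim q y = Sum.elim (f - q) (0 : Fin s → ℂ) := by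
    funext i
    cases i <;> simp
  have hval : l2norm (Sum.elim f y - Sum.elim q y)
      = Real.sqrt (∑ j ∈ T, Complex.normSq (χ j)) := by
    rw [hdiff, l2norm, Fintype.sum_sum_type]
    simp only [Sum.elim_inl, Sum.elim_inr, Pi.zero_apply, Complex.normSq_zero,
      Finset.sum_const_zero, add_zero]
    rw [hfq, DistAux.sum_normSq_orth u hu T χ]
  -- numeric bound
  set sk : ℝ := σ ⟨k, hkm⟩ with hsk
  have hsknn : 0 ≤ sk := hσnn _
  have hskden : 0 < σ' ^ 2 - sk ^ 2 :=
    sub_pos.2 (pow_lt_pow_left₀ hgap hsknn two_ne_zero)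
  set R : ℝ := sk / (σ' ^ 2 - sk ^ 2) with hR
  have hRnn : 0 ≤ R := div_nonneg hsknn hskden.le
  have hterm : ∀ j ∈ T, Complex.normSq (χ j) ≤ R ^ 2 * Complex.normSq (g j) := by
    intro j hj
    have hjk : sk ≤ σ' := le_of_lt hgap
    have hjle : σ j ≤ sk := by
      apply hσanti
      have : k ≤ (j : ℕ) := by
        have := (Finset.mem_filter.1 hj).2
        omega
      exact this
    have hrj : σ j / (σ' ^ 2 - (σ j) ^ 2) ≤ R :=
      DistAux.ratio_mono (hσnn j) hjle hgap
    have hdenj : 0 < σ' ^ 2 - (σ j) ^ 2 :=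
      sub_pos.2 (pow_lt_pow_left₀ (lt_of_le_of_lt hjle hgap) (hσnn j) two_ne_zero)
    have hnsχ : Complex.normSq (χ j)
        = (σ j / (σ' ^ 2 - (σ j) ^ 2)) ^ 2 * Complex.normSq (g j) := by
      simp only [hχdef]
      have hcast : ((σ' : ℂ) ^ 2 - ((σ j : ℝ) : ℂ) ^ 2)
          = ((σ' ^ 2 - (σ j) ^ 2 : ℝ) : ℂ) := by push_cast; ring
      rw [hcast, Complex.normSq_div, Complex.normSq_mul, Complex.normSq_ofReal,
        Complex.normSq_ofReal]
      field_simp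
    rw [hnsχ]
    have h2 : (σ j / (σ' ^ 2 - (σ j) ^ 2)) ^ 2 ≤ R ^ 2 := by
      have h0 : 0 ≤ σ j / (σ' ^ 2 - (σ j) ^ 2) := div_nonneg (hσnn j) hdenj.le
      exact pow_le_pow_left₀ h0 hrj 2
    exact mul_le_mul_of_nonneg_right h2 (Complex.normSq_nonneg _)
  have hsum1 : ∑ j ∈ T, Complex.normSq (χ j)
      ≤ R ^ 2 * ∑ i, Complex.normSq ((Eᴴ *ᵥ y) i) := by
    calc ∑ j ∈ T, Complex.normSq (χ j)
        ≤ ∑ j ∈ T, R ^ 2 * Complex.normSq (g j) := Finset.sum_le_sum hterm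
      _ = R ^ 2 * ∑ j ∈ T, Complex.normSq (g j) := by rw [Finset.mul_sum]
      _ ≤ R ^ 2 * ∑ j, Complex.normSq (g j) := by
          apply mul_le_mul_of_nonneg_left _ (sq_nonneg R)
          exact Finset.sum_le_sum_of_subset_of_nonneg (Finset.filter_subset _ _)
            (fun j _ _ => Complex.normSq_nonneg _)
      _ ≤ R ^ 2 * ∑ i, Complex.normSq ((Eᴴ *ᵥ y) i) := by
          apply mul_le_mul_of_nonneg_left _ (sq_nonneg R)
          exact DistAux.bessel v hv (Eᴴ *ᵥ y)
  have hfinal : l2norm (Sum.elim f y - Sum.elim q y)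
      ≤ l2norm (Eᴴ *ᵥ y) * sk / (σ' ^ 2 - sk ^ 2) := by
    rw [hval]
    have h1 : Real.sqrt (∑ j ∈ T, Complex.normSq (χ j))
        ≤ Real.sqrt (R ^ 2 * ∑ i, Complex.normSq ((Eᴴ *ᵥ y) i)) :=
      Real.sqrt_le_sqrt hsum1
    have h2 : Real.sqrt (R ^ 2 * ∑ i, Complex.normSq ((Eᴴ *ᵥ y) i))
        = R * l2norm (Eᴴ *ᵥ y) := by
      rw [Real.sqrt_mul (sq_nonneg R), Real.sqrt_sq hRnn, l2norm]
    calc Real.sqrt (∑ j ∈ T, Complex.normSq (χ j))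
        ≤ R * l2norm (Eᴴ *ᵥ y) := by rw [← h2]; exact h1
      _ = l2norm (Eᴴ *ᵥ y) * sk / (σ' ^ 2 - sk ^ 2) := by
          rw [hR]; ring
  -- conclude via csInf
  have hbdd : BddBelow {d : ℝ | ∃ (c : Fin k → ℂ) (w : Fin s → ℂ),
      d = l2norm (Sum.elim f y -
        Sum.elim (∑ j : Fin k, c j • u (Fin.castLE hkm.le j)) w)} := by
    refine ⟨0, fun d hd => ?_⟩
    obtain ⟨c, w, rfl⟩ := hd
    exact Real.sqrt_nonneg _
  have hmem : l2norm (Sum.elim f y - Sum.elim q y) ∈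
      {d : ℝ | ∃ (c : Fin k → ℂ) (w : Fin s → ℂ),
        d = l2norm (Sum.elim f y -
          Sum.elim (∑ j : Fin k, c j • u (Fin.castLE hkm.le j)) w)} := by
    exact ⟨c0, y, by rw [hqdef]⟩
  exact le_trans (csInf_le hbdd hmem) hfinal
end

section
/- Let B ∈ ℂ^{m×n}, E ∈ ℂ^{s×n}, A = [B; E], and let û = [f; y] be a unit left singular vector of A with singular value σ̂. Suppose σ̂² is not an eigenvalue of BB^H and λ ∈ ℝ exceeds all eigenvalues of BB^H restricted to the orthogonal complement of the top-k left singular subspace. Then û = [[U_k, 0],[0, I_s]] · [χ_{1},...,χ_{k}, y]^T - [B(λ) Σ_{ρ=0}^{∞} ((σ̂² - λ) B(λ))^ρ B E^H y; 0], where χ_j = -(E v^{(j)})^H y · σ_j/(σ_j² - σ̂²) and B(λ) = (I_m - U_k U_k^H)(BB^H - λ I_m)^{-1}, provided the series converges. -/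
open Matrix
open scoped Matrix.Norms.L2Operator

section AuxLemmas

variable {p q r : Type*} [Fintype q]

lemma aux_vecMulVec_mul (a : p → ℂ) (b c : q → ℂ) (d : r → ℂ) :
    vecMulVec a b * vecMulVec c d = (b ⬝ᵥ c) • vecMulVec a d := by
  ext i j
  simp only [mul_apply, vecMulVec_apply, Matrix.smul_apply, dotProduct, smul_eq_mul,
    Finset.sum_mul]
  exact Finset.sum_congr rfl fun x _ => by ring

lemma aux_vecMulVec_mulVec (a : p → ℂ) (b x : q → ℂ) :
    vecMulVec a b *ᵥ x = (b ⬝ᵥ x) • a := by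
  ext i
  simp only [mulVec, dotProduct, vecMulVec_apply, Pi.smul_apply, smul_eq_mul, Finset.sum_mul]
  exact Finset.sum_congr rfl fun j _ => by ring

omit [Fintype q] in
lemma aux_conjT_vecMulVec (a : p → ℂ) (b : q → ℂ) :
    (vecMulVec a b)ᴴ = vecMulVec (star b) (star a) := by
  ext i j
  simp [vecMulVec_apply, conjTranspose_apply, mul_comm]

lemma aux_sum_mulVec {ι : Type*} (s : Finset ι) (Ms : ι → Matrix p q ℂ) (x : q → ℂ) :
    (∑ i ∈ s, Ms i) *ᵥ x = ∑ i ∈ s, Ms i *ᵥ x := by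
  ext j
  simp only [mulVec, dotProduct, Matrix.sum_apply, Finset.sum_mul, Finset.sum_apply]
  rw [Finset.sum_comm]

end AuxLemmas

/-- Proposition 4: expression of a left singular vector `û = [f; y]` of `A = [B; E]` via the
leading left singular vectors of `B` and the resolvent Neumann series, i.e.
`û = [[U_k,0],[0,I]]·[χ; y] - [B(λ) Σ_ρ ((σ'² - λ)B(λ))^ρ B Eᴴ y; 0]`. -/
theorem left_singular_vector_resolvent_expression {m n s k : ℕ}
    (hkm : k ≤ Nat.min m n)
    (B : Matrix (Fin m) (Fin n) ℂ) (E : Matrix (Fin s) (Fin n) ℂ)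
    (A : Matrix (Fin m ⊕ Fin s) (Fin n) ℂ) (hA : A = fromRows B E)
    (u : Fin (Nat.min m n) → Fin m → ℂ) (v : Fin (Nat.min m n) → Fin n → ℂ)
    (σ : Fin (Nat.min m n) → ℝ)
    (hu : ∀ i j, star (u i) ⬝ᵥ u j = if i = j then 1 else 0)
    (hv : ∀ i j, star (v i) ⬝ᵥ v j = if i = j then 1 else 0)
    (hB : B = ∑ j, ((σ j : ℝ) : ℂ) • vecMulVec (u j) (star (v j)))
    (hσanti : Antitone σ) (hσnn : ∀ j, 0 ≤ σ j)
    (σ' : ℝ) (f : Fin m → ℂ) (y : Fin s → ℂ)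
    (hne : ∀ j, σ' ^ 2 ≠ (σ j) ^ 2)
    (hinv : IsUnit (B * Bᴴ - ((σ' : ℂ) ^ 2) • (1 : Matrix (Fin m) (Fin m) ℂ)))
    (hunit : ∑ i, Complex.normSq (Sum.elim f y i) = 1)
    (hsv : (A * Aᴴ) *ᵥ Sum.elim f y = ((σ' : ℂ) ^ 2) • Sum.elim f y)
    (lam : ℝ)
    (hlamtail : ∀ j : Fin (Nat.min m n), k ≤ (j : ℕ) → (σ j) ^ 2 < lam)
    (hinvlam : IsUnit (B * Bᴴ - ((lam : ℝ) : ℂ) • (1 : Matrix (Fin m) (Fin m) ℂ)))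
    (P Blam : Matrix (Fin m) (Fin m) ℂ)
    (hP : P = ∑ j : Fin k, vecMulVec (u (Fin.castLE hkm j)) (star (u (Fin.castLE hkm j))))
    (hBlam : Blam = (1 - P) * (B * Bᴴ - ((lam : ℝ) : ℂ) • (1 : Matrix (Fin m) (Fin m) ℂ))⁻¹)
    (hconv : Summable fun ρ : ℕ => ((σ' ^ 2 - lam : ℝ) : ℂ) ^ ρ • Blam ^ ρ) :
    Sum.elim f y =
      Sum.elim
        (∑ j : Fin k, ((-(star (E *ᵥ v (Fin.castLE hkm j)) ⬝ᵥ y)) *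
          ((σ (Fin.castLE hkm j) / ((σ (Fin.castLE hkm j)) ^ 2 - σ' ^ 2) : ℝ) : ℂ)) •
            u (Fin.castLE hkm j)) y -
      Sum.elim
        ((Blam * ∑' ρ : ℕ, ((σ' ^ 2 - lam : ℝ) : ℂ) ^ ρ • Blam ^ ρ) *ᵥ
          ((B * Eᴴ) *ᵥ y)) 0 := by
  classical
  set c : ℂ := ((σ' ^ 2 - lam : ℝ) : ℂ) with hc
  set N : Matrix (Fin m) (Fin m) ℂ :=
    B * Bᴴ - ((lam : ℝ) : ℂ) • (1 : Matrix (Fin m) (Fin m) ℂ) with hNdef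
  set M : Matrix (Fin m) (Fin m) ℂ :=
    B * Bᴴ - ((σ' : ℂ) ^ 2) • (1 : Matrix (Fin m) (Fin m) ℂ) with hMdef
  set S : Matrix (Fin m) (Fin m) ℂ := ∑' ρ : ℕ, c ^ ρ • Blam ^ ρ with hSdef
  -- conjugate transpose of B
  have hBH : Bᴴ = ∑ j, ((σ j : ℝ) : ℂ) • vecMulVec (v j) (star (u j)) := by
    rw [hB, conjTranspose_sum]
    refine Finset.sum_congr rfl fun j _ => ?_
    rw [conjTranspose_smul, aux_conjT_vecMulVec, star_star]
    congr 1
    simp [Complex.star_def, Complex.conj_ofReal]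
  -- spectral decomposition of B * Bᴴ
  have hBBH : B * Bᴴ = ∑ j, (((σ j : ℝ) : ℂ)) ^ 2 • vecMulVec (u j) (star (u j)) := by
    rw [hBH, hB, Matrix.sum_mul]
    refine Finset.sum_congr rfl fun j _ => ?_
    rw [Matrix.mul_sum, Finset.sum_eq_single j]
    · rw [Matrix.smul_mul, Matrix.mul_smul, aux_vecMulVec_mul, hv, if_pos rfl, one_smul,
        smul_smul, ← pow_two]
    · intro i _ hij
      rw [Matrix.smul_mul, Matrix.mul_smul, aux_vecMulVec_mul, hv, if_neg (Ne.symm hij),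
        zero_smul, smul_zero, smul_zero]
    · exact fun h => absurd (Finset.mem_univ j) h
  -- P is idempotent
  have hPsq : P * P = P := by
    rw [hP, Matrix.sum_mul]
    refine Finset.sum_congr rfl fun a _ => ?_
    rw [Matrix.mul_sum, Finset.sum_eq_single a]
    · rw [aux_vecMulVec_mul, hu, if_pos rfl, one_smul]
    · intro b _ hb
      rw [aux_vecMulVec_mul, hu, if_neg, zero_smul]
      exact fun hcon => hb ((Fin.castLE_inj.mp hcon).symm)
    · exact fun h => absurd (Finset.mem_univ a) h
  -- P commutes with B * Bᴴ
  have hPB : P * (B * Bᴴ) =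
      ∑ a : Fin k, (((σ (Fin.castLE hkm a) : ℝ) : ℂ)) ^ 2 •
        vecMulVec (u (Fin.castLE hkm a)) (star (u (Fin.castLE hkm a))) := by
    rw [hP, hBBH, Matrix.sum_mul]
    refine Finset.sum_congr rfl fun a _ => ?_
    rw [Matrix.mul_sum, Finset.sum_eq_single (Fin.castLE hkm a)]
    · rw [Matrix.mul_smul, aux_vecMulVec_mul, hu, if_pos rfl, one_smul]
    · intro b _ hb
      rw [Matrix.mul_smul, aux_vecMulVec_mul, hu, if_neg (Ne.symm hb), zero_smul, smul_zero]
    · exact fun h => absurd (Finset.mem_univ _) h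
  have hBP : (B * Bᴴ) * P =
      ∑ a : Fin k, (((σ (Fin.castLE hkm a) : ℝ) : ℂ)) ^ 2 •
        vecMulVec (u (Fin.castLE hkm a)) (star (u (Fin.castLE hkm a))) := by
    rw [hP, hBBH, Finset.mul_sum]
    refine Finset.sum_congr rfl fun a _ => ?_
    rw [Finset.sum_mul, Finset.sum_eq_single (Fin.castLE hkm a)]
    · rw [Matrix.smul_mul, aux_vecMulVec_mul, hu, if_pos rfl, one_smul]
    · intro b _ hb
      rw [Matrix.smul_mul, aux_vecMulVec_mul, hu, if_neg hb, zero_smul, smul_zero]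
    · exact fun h => absurd (Finset.mem_univ _) h
  have hcommBP : P * (B * Bᴴ) = (B * Bᴴ) * P := hPB.trans hBP.symm
  -- P commutes with N and with N⁻¹
  have hPN : P * N = N * P := by
    rw [hNdef, mul_sub, sub_mul, hcommBP, Matrix.mul_smul, Matrix.smul_mul, mul_one, one_mul]
  have hNl : N⁻¹ * N = 1 := Matrix.nonsing_inv_mul N ((Matrix.isUnit_iff_isUnit_det N).mp hinvlam)
  have hNr : N * N⁻¹ = 1 := Matrix.mul_nonsing_inv N ((Matrix.isUnit_iff_isUnit_det N).mp hinvlam)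
  have hPNi : P * N⁻¹ = N⁻¹ * P := by
    calc P * N⁻¹ = (N⁻¹ * N) * (P * N⁻¹) := by rw [hNl, one_mul]
      _ = N⁻¹ * ((N * P) * N⁻¹) := by simp only [Matrix.mul_assoc]
      _ = N⁻¹ * ((P * N) * N⁻¹) := by rw [hPN]
      _ = (N⁻¹ * P) * (N * N⁻¹) := by simp only [Matrix.mul_assoc]
      _ = N⁻¹ * P := by rw [hNr, mul_one]
  have hQNi : (1 - P) * N⁻¹ = N⁻¹ * (1 - P) := by
    rw [sub_mul, mul_sub, one_mul, mul_one, hPNi]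
  have hBlamN : Blam * N = 1 - P := by
    rw [hBlam, Matrix.mul_assoc, hNl, mul_one]
  have hQQ : (1 - P) * (1 - P) = 1 - P := by
    rw [mul_sub, mul_one, sub_mul, one_mul, hPsq, sub_self, sub_zero]
  have hBlamQ : Blam * (1 - P) = Blam := by
    have h1 : Blam * (1 - P) = ((1 - P) * (1 - P)) * N⁻¹ := by
      rw [hBlam, Matrix.mul_assoc, ← hQNi, ← Matrix.mul_assoc]
    rw [h1, hQQ, ← hBlam]
  have hpow : ∀ ρ : ℕ, Blam ^ (ρ + 1) * (1 - P) = Blam ^ (ρ + 1) := fun ρ => by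
    rw [pow_succ, Matrix.mul_assoc, hBlamQ]
  -- the telescoping series
  set g : ℕ → Matrix (Fin m) (Fin m) ℂ := fun ρ => c ^ ρ • (Blam ^ ρ * (1 - P)) with hgdef
  have hg : Summable g := by
    have h2 := hconv.mul_right (1 - P)
    simpa only [smul_mul_assoc] using h2
  have hg0 : g 0 = 1 - P := by simp [hgdef]
  have hgsucc : ∀ ρ : ℕ, g (ρ + 1) = c ^ (ρ + 1) • Blam ^ (ρ + 1) := fun ρ => by
    rw [hgdef]; simp only [hpow]
  have hMN : M = N - c • (1 : Matrix (Fin m) (Fin m) ℂ) := by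
    rw [hMdef, hNdef, hc]
    push_cast
    module
  have hterm : ∀ ρ : ℕ, Blam * (c ^ ρ • Blam ^ ρ) * M = g ρ - g (ρ + 1) := by
    intro ρ
    have e1 : Blam * (c ^ ρ • Blam ^ ρ) = c ^ ρ • Blam ^ (ρ + 1) := by
      rw [mul_smul_comm, ← pow_succ']
    have e2 : Blam ^ (ρ + 1) * M = Blam ^ ρ * (1 - P) - c • Blam ^ (ρ + 1) := by
      rw [hMN, mul_sub, Matrix.mul_smul, mul_one, pow_succ, Matrix.mul_assoc, hBlamN]
    rw [e1, Matrix.smul_mul, e2, smul_sub, smul_smul, ← pow_succ, hgsucc, hgdef]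
  have htsum : Blam * S * M = 1 - P := by
    have hsum2 : Summable fun ρ : ℕ => Blam * (c ^ ρ • Blam ^ ρ) := hconv.mul_left Blam
    have e1 : Blam * S = ∑' ρ : ℕ, Blam * (c ^ ρ • Blam ^ ρ) := (hconv.tsum_mul_left Blam).symm
    have e2 : Blam * S * M = ∑' ρ : ℕ, Blam * (c ^ ρ • Blam ^ ρ) * M := by
      rw [e1, ← hsum2.tsum_mul_right M]
    rw [e2, tsum_congr hterm]
    have hg1 : Summable fun ρ : ℕ => g (ρ + 1) := (summable_nat_add_iff 1).mpr hg
    rw [hg.tsum_sub hg1, hg.tsum_eq_zero_add, add_sub_cancel_right, hg0]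
  -- the singular vector equation, first block
  have hAAH := hsv
  rw [hA, ← mulVec_mulVec, conjTranspose_fromRows_eq_fromCols_conjTranspose,
    fromCols_mulVec_sumElim, fromRows_mulVec] at hAAH
  have hfeq : B *ᵥ (Bᴴ *ᵥ f + Eᴴ *ᵥ y) = ((σ' : ℂ) ^ 2) • f := by
    funext i
    simpa using congrFun hAAH (Sum.inl i)
  have hMf : M *ᵥ f = -((B * Eᴴ) *ᵥ y) := by
    have h2 : (B * Bᴴ) *ᵥ f + (B * Eᴴ) *ᵥ y = ((σ' : ℂ) ^ 2) • f := by
      rw [← hfeq, mulVec_add, mulVec_mulVec, mulVec_mulVec]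
    rw [hMdef, sub_mulVec, Matrix.smul_mulVec, one_mulVec, ← h2]
    abel
  -- eigen-relations
  have hBBHu : ∀ jj, (B * Bᴴ) *ᵥ u jj = (((σ jj : ℝ) : ℂ)) ^ 2 • u jj := by
    intro jj
    rw [hBBH, aux_sum_mulVec, Finset.sum_eq_single jj]
    · rw [Matrix.smul_mulVec, aux_vecMulVec_mulVec, hu, if_pos rfl, one_smul]
    · intro i _ hij
      rw [Matrix.smul_mulVec, aux_vecMulVec_mulVec, hu, if_neg hij, zero_smul, smul_zero]
    · exact fun h => absurd (Finset.mem_univ _) h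
  have hBHu : ∀ jj, Bᴴ *ᵥ u jj = ((σ jj : ℝ) : ℂ) • v jj := by
    intro jj
    rw [hBH, aux_sum_mulVec, Finset.sum_eq_single jj]
    · rw [Matrix.smul_mulVec, aux_vecMulVec_mulVec, hu, if_pos rfl, one_smul]
    · intro i _ hij
      rw [Matrix.smul_mulVec, aux_vecMulVec_mulVec, hu, if_neg hij, zero_smul, smul_zero]
    · exact fun h => absurd (Finset.mem_univ _) h
  have hMu : ∀ jj, M *ᵥ u jj = ((((σ jj : ℝ) : ℂ)) ^ 2 - (σ' : ℂ) ^ 2) • u jj := by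
    intro jj
    rw [hMdef, sub_mulVec, Matrix.smul_mulVec, one_mulVec, hBBHu, sub_smul]
  have hMherm : Mᴴ = M := by
    rw [hMdef]
    simp [conjTranspose_sub, conjTranspose_mul, conjTranspose_smul, conjTranspose_one,
      Complex.star_def, Complex.conj_ofReal, map_pow]
  -- the coefficient identity
  have hchi : ∀ jj : Fin (Nat.min m n),
      ((((σ jj : ℝ) : ℂ)) ^ 2 - (σ' : ℂ) ^ 2) * (star (u jj) ⬝ᵥ f) =
        -(((σ jj : ℝ) : ℂ) * (star (E *ᵥ v jj) ⬝ᵥ y)) := by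
    intro jj
    have hstar : star (u jj) ᵥ* M = ((((σ jj : ℝ) : ℂ)) ^ 2 - (σ' : ℂ) ^ 2) • star (u jj) := by
      have h1 : star (M *ᵥ u jj) = star (u jj) ᵥ* M := by rw [star_mulVec, hMherm]
      rw [← h1, hMu, star_smul]
      congr 1
      simp [Complex.star_def, Complex.conj_ofReal, map_sub, map_pow]
    have lhs : star (u jj) ⬝ᵥ (M *ᵥ f) =
        ((((σ jj : ℝ) : ℂ)) ^ 2 - (σ' : ℂ) ^ 2) * (star (u jj) ⬝ᵥ f) := by
      rw [dotProduct_mulVec, hstar, smul_dotProduct, smul_eq_mul]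
    have rhs : star (u jj) ⬝ᵥ (M *ᵥ f) = -(((σ jj : ℝ) : ℂ) * (star (E *ᵥ v jj) ⬝ᵥ y)) := by
      rw [hMf, dotProduct_neg]
      congr 1
      rw [dotProduct_mulVec]
      have h1 : star (u jj) ᵥ* (B * Eᴴ) = star ((B * Eᴴ)ᴴ *ᵥ u jj) := by
        rw [star_mulVec, conjTranspose_conjTranspose]
      rw [h1, conjTranspose_mul, conjTranspose_conjTranspose, ← mulVec_mulVec, hBHu,
        mulVec_smul, star_smul, smul_dotProduct, smul_eq_mul]
      congr 1
      simp [Complex.star_def, Complex.conj_ofReal]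
    rw [← lhs, rhs]
  -- projection of f onto the leading singular subspace
  have hPf : P *ᵥ f =
      ∑ j : Fin k, ((-(star (E *ᵥ v (Fin.castLE hkm j)) ⬝ᵥ y)) *
        ((σ (Fin.castLE hkm j) / ((σ (Fin.castLE hkm j)) ^ 2 - σ' ^ 2) : ℝ) : ℂ)) •
          u (Fin.castLE hkm j) := by
    rw [hP, aux_sum_mulVec]
    refine Finset.sum_congr rfl fun j _ => ?_
    rw [aux_vecMulVec_mulVec]
    congr 1
    have hne' : ((((σ (Fin.castLE hkm j) : ℝ) : ℂ)) ^ 2 - (σ' : ℂ) ^ 2) ≠ 0 := by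
      intro h
      rw [sub_eq_zero] at h
      exact hne (Fin.castLE hkm j) (by exact_mod_cast h.symm)
    have hch := hchi (Fin.castLE hkm j)
    push_cast
    field_simp
    linear_combination hch
  -- the resolvent term recovers (P - 1) f
  have hW : (Blam * S) *ᵥ ((B * Eᴴ) *ᵥ y) = P *ᵥ f - f := by
    have hy : (B * Eᴴ) *ᵥ y = -(M *ᵥ f) := by rw [hMf, neg_neg]
    rw [hy, mulVec_neg, mulVec_mulVec, htsum, sub_mulVec, one_mulVec, neg_sub]
  -- assemble
  rw [← hPf, hW]
  funext z
  cases z with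
  | inl i => simp only [Pi.sub_apply, Sum.elim_inl]; ring
  | inr i => simp
end

section
/- Let B ∈ ℂ^{m×n} have rank exactly k with compact SVD B = U_k Σ_k V_k^H, let E ∈ ℂ^{s×n}, and let (I - V_kV_k^H)E^H = QR be a QR factorization with Q having orthonormal columns. Then [B; E] = [[U_k, 0],[0, I_s]] · [[Σ_k, 0],[E V_k, R^H]] · [V_k, Q]^H, and consequently the Zha–Simon update computes the exact rank-k truncated SVD of A = [B; E]. -/
open Matrix

/-- Zha–Simon row update factorization: if `B = U_kΣ_kV_kᴴ` has rank exactly `k` and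
`(I - V_kV_kᴴ)Eᴴ = QR` with `Q` having orthonormal columns, then
`[B; E] = [[U_k, 0],[0, I_s]] · [[Σ_k, 0],[E V_k, Rᴴ]] · [V_k, Q]ᴴ`; hence the Zha–Simon
update recovers the exact rank-`k` truncated SVD of `A = [B; E]`. -/
theorem zha_simon_row_update_exact {m n s k : ℕ}
    (B : Matrix (Fin m) (Fin n) ℂ) (E : Matrix (Fin s) (Fin n) ℂ)
    (Uk : Matrix (Fin m) (Fin k) ℂ) (Vk : Matrix (Fin n) (Fin k) ℂ) (σk : Fin k → ℝ)
    (hUk : Ukᴴ * Uk = 1) (hVk : Vkᴴ * Vk = 1)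
    (hB : B = Uk * diagonal (fun i => (σk i : ℂ)) * Vkᴴ)
    (hrank : B.rank = k)
    (Q : Matrix (Fin n) (Fin s) ℂ) (R : Matrix (Fin s) (Fin s) ℂ)
    (hQ : Qᴴ * Q = 1)
    (hQR : (1 - Vk * Vkᴴ) * Eᴴ = Q * R) :
    fromRows B E =
      fromBlocks Uk 0 0 (1 : Matrix (Fin s) (Fin s) ℂ) *
        fromBlocks (diagonal (fun i => (σk i : ℂ))) 0 (E * Vk) Rᴴ *
        (fromCols Vk Q)ᴴ := by
  have hEQ : Rᴴ * Qᴴ = E - E * Vk * Vkᴴ := by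
    have := congrArg conjTranspose hQR
    simp only [conjTranspose_mul, conjTranspose_sub, conjTranspose_one,
      conjTranspose_conjTranspose] at this
    rw [← this, Matrix.mul_sub, Matrix.mul_one, Matrix.mul_assoc]
  rw [conjTranspose_fromCols_eq_fromRows_conjTranspose, Matrix.mul_assoc,
    fromBlocks_mul_fromRows, fromBlocks_mul_fromRows]
  rw [hEQ, hB]
  simp [Matrix.mul_assoc]
end

section
/- Let B ∈ ℂ^{m×n} have rank exactly k with compact SVD B = U_kΣ_kV_k^H, let E ∈ ℂ^{m×s}, and let (I - U_kU_k^H)E = QR. Then [B, E] = [U_k, Q] · [[Σ_k, U_k^H E],[0, R]] · [[V_k^H, 0],[0, I_s]], so the column-update Zha–Simon scheme is exact. -/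
open Matrix

/-- Zha–Simon column update factorization: if `B = U_kΣ_kV_kᴴ` has rank exactly `k` and
`(I - U_kU_kᴴ)E = QR`, then
`[B, E] = [U_k, Q] · [[Σ_k, U_kᴴE],[0, R]] · [[V_kᴴ, 0],[0, I_s]]`; hence the column-update
Zha–Simon scheme is exact. -/
theorem zha_simon_column_update_exact {m n s k : ℕ}
    (B : Matrix (Fin m) (Fin n) ℂ) (E : Matrix (Fin m) (Fin s) ℂ)
    (Uk : Matrix (Fin m) (Fin k) ℂ) (Vk : Matrix (Fin n) (Fin k) ℂ) (σk : Fin k → ℝ)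
    (hUk : Ukᴴ * Uk = 1) (hVk : Vkᴴ * Vk = 1)
    (hB : B = Uk * diagonal (fun i => (σk i : ℂ)) * Vkᴴ)
    (hrank : B.rank = k)
    (Q : Matrix (Fin m) (Fin s) ℂ) (R : Matrix (Fin s) (Fin s) ℂ)
    (hQ : Qᴴ * Q = 1)
    (hQR : (1 - Uk * Ukᴴ) * E = Q * R) :
    fromCols B E =
      fromCols Uk Q *
        fromBlocks (diagonal (fun i => (σk i : ℂ))) (Ukᴴ * E) 0 R *
        fromBlocks Vkᴴ 0 0 (1 : Matrix (Fin s) (Fin s) ℂ) := by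
  rw [fromCols_mul_fromBlocks, fromCols_mul_fromBlocks]
  have hQR' : Q * R = E - Uk * (Ukᴴ * E) := by
    rw [← hQR, Matrix.sub_mul, Matrix.one_mul, Matrix.mul_assoc]
  rw [fromCols_ext_iff]
  constructor
  · rw [Matrix.mul_zero, add_zero, Matrix.mul_zero, add_zero, hB]
  · rw [Matrix.mul_zero, zero_add, Matrix.mul_one, hQR']
    abel
end
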